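/- In the torus expansion setup, let h be a grading-preserving ℚ-algebra endomorphism of B with partial derivatives D_I : A → A, and write D_0 = D_∅ and D_1 = D_{{1}} (the component at t_{{1}} = x_1). Then for all homogeneous a ∈ A_p and all b ∈ A: D_1(ab) = D_1(a)·D_0(b) + (−1)^p·D_0(a)·D_1(b). Consequently, if D_0 is bijective, then D_1 ∘ D_0^{−1} is a derivation of A of degree −1, i.e. it maps A_p into A_{p−1} and satisfies E(ab) = E(a)b + (−1)^p a E(b) for E = D_1 ∘ D_0^{−1}, a ∈ A_p, b ∈ A. -/

import Mathlib

/-- The square-free monomial `t_I = x_{i₁}⋯x_{i_k}` associated to a subset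
`I = {i₁ < ⋯ < i_k} ⊆ {1,…,d}` (factors multiplied in increasing order of the indices;
`t_∅ = 1`). -/
def sqFreeMonomial {B : Type} [Ring B] {d : ℕ} (x : Fin d → B) (I : Finset (Fin d)) : B :=
  ((I.sort (· ≤ ·)).map x).prod

set_option linter.unusedSectionVars false

section Aux
variable {B : Type} [Ring B] [Algebra ℚ B]
  (𝒜 : ℕ → Submodule ℚ B) [GradedAlgebra 𝒜]
  {d : ℕ} (x : Fin d → B)

lemma mono_mem (hx : ∀ i, x i ∈ 𝒜 1) (I : Finset (Fin d)) :
    sqFreeMonomial x I ∈ 𝒜 I.card := by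
  have key : ∀ l : List (Fin d), (l.map x).prod ∈ 𝒜 l.length := by
    intro l
    induction l with
    | nil => exact SetLike.one_mem_graded 𝒜
    | cons i l ih =>
      simpa [Nat.add_comm 1 l.length] using SetLike.mul_mem_graded (hx i) ih
  simpa [sqFreeMonomial, Finset.length_sort] using key (I.sort (· ≤ ·))

lemma cons_mono {j : Fin d} {S : Finset (Fin d)} (hj : j ∉ S) (hle : ∀ b ∈ S, j ≤ b) :
    sqFreeMonomial x (insert j S) = x j * sqFreeMonomial x S := by
  unfold sqFreeMonomial
  rw [Finset.sort_insert _ hle hj, List.map_cons, List.prod_cons]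

lemma xi_sq {hcomm : ∀ (p q : ℕ), ∀ a ∈ 𝒜 p, ∀ b ∈ 𝒜 q,
      a * b = (-1 : B) ^ (p * q) * (b * a)} (hx : ∀ i, x i ∈ 𝒜 1) (i : Fin d) :
    x i * x i = 0 := by
  have := hcomm 1 1 (x i) (hx i) (x i) (hx i)
  simp only [mul_one, pow_one, neg_one_mul] at this
  have h2 : (2 : ℚ) • (x i * x i) = 0 := by
    rw [two_smul]
    nth_rewrite 1 [this]; exact neg_add_cancel _
  have h3 := congrArg (fun y => ((2:ℚ)⁻¹) • y) h2
  simpa [smul_smul] using h3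

lemma xi_mul_mem (hcomm : ∀ (p q : ℕ), ∀ a ∈ 𝒜 p, ∀ b ∈ 𝒜 q,
      a * b = (-1 : B) ^ (p * q) * (b * a)) (hx : ∀ i, x i ∈ 𝒜 1) :
    ∀ (n : ℕ) (J : Finset (Fin d)), J.card = n → ∀ i ∈ J,
      x i * sqFreeMonomial x J = 0 := by
  intro n
  induction n with
  | zero =>
    intro J hJ i hi
    rw [Finset.card_eq_zero] at hJ
    subst hJ; exact absurd hi (Finset.notMem_empty i)
  | succ n ih =>
    intro J hcard i hi
    have hne : J.Nonempty := ⟨i, hi⟩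
    set j := J.min' hne with hj
    have hjJ : j ∈ J := J.min'_mem hne
    set J' := J.erase j with hJ'
    have hjJ' : j ∉ J' := Finset.notMem_erase _ _
    have hins : insert j J' = J := Finset.insert_erase hjJ
    have hle : ∀ b ∈ J', j ≤ b := fun b hb => J.min'_le b (Finset.mem_of_mem_erase hb)
    have hsplit : sqFreeMonomial x J = x j * sqFreeMonomial x J' := by
      conv_lhs => rw [← hins]
      exact cons_mono x hjJ' hle
    have hcard' : J'.card = n := by
      rw [hJ', Finset.card_erase_of_mem hjJ, hcard]; rfl
    rcases eq_or_ne i j with heq | hij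
    · rw [hsplit, ← mul_assoc, heq, xi_sq (hcomm := hcomm) 𝒜 x hx j, zero_mul]
    · have hiJ' : i ∈ J' := Finset.mem_erase.mpr ⟨hij, hi⟩
      have hxx : x i * x j = -(x j * x i) := by
        have := hcomm 1 1 (x i) (hx i) (x j) (hx j)
        simpa [neg_one_mul] using this
      rw [hsplit, ← mul_assoc, hxx, neg_mul, mul_assoc, ih J' hcard' i hiJ', mul_zero, neg_zero]

lemma xi_mul (hcomm : ∀ (p q : ℕ), ∀ a ∈ 𝒜 p, ∀ b ∈ 𝒜 q,
      a * b = (-1 : B) ^ (p * q) * (b * a)) (hx : ∀ i, x i ∈ 𝒜 1) :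
    ∀ (n : ℕ) (J : Finset (Fin d)), J.card = n → ∀ i, i ∉ J →
      ∃ ε : ℚ, x i * sqFreeMonomial x J = ε • sqFreeMonomial x (insert i J) ∧
        ((∀ b ∈ J, i ≤ b) → ε = 1) := by
  intro n
  induction n with
  | zero =>
    intro J hJ i _
    rw [Finset.card_eq_zero] at hJ
    subst hJ
    refine ⟨1, ?_, fun _ => rfl⟩
    rw [one_smul, cons_mono x (Finset.notMem_empty i) (by simp)]
  | succ n ih =>
    intro J hcard i hiJ
    by_cases hall : ∀ b ∈ J, i ≤ b
    · exact ⟨1, by rw [one_smul, cons_mono x hiJ hall], fun _ => rfl⟩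
    · have hne : J.Nonempty := by
        rcases Finset.eq_empty_or_nonempty J with rfl | h
        · exact absurd (by simp) hall
        · exact h
      set j := J.min' hne with hj
      have hjJ : j ∈ J := J.min'_mem hne
      have hji : j < i := by
        push_neg at hall
        obtain ⟨b, hb, hbi⟩ := hall
        exact lt_of_le_of_lt (J.min'_le b hb) hbi
      set J' := J.erase j with hJ'
      have hjJ' : j ∉ J' := Finset.notMem_erase _ _
      have hins : insert j J' = J := Finset.insert_erase hjJ
      have hle : ∀ b ∈ J', j ≤ b := fun b hb => J.min'_le b (Finset.mem_of_mem_erase hb)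
      have hsplit : sqFreeMonomial x J = x j * sqFreeMonomial x J' := by
        conv_lhs => rw [← hins]
        exact cons_mono x hjJ' hle
      have hcard' : J'.card = n := by
        rw [hJ', Finset.card_erase_of_mem hjJ, hcard]; rfl
      have hiJ' : i ∉ J' := fun hmem => hiJ (Finset.mem_of_mem_erase hmem)
      obtain ⟨ε₀, h0, _⟩ := ih J' hcard' i hiJ'
      have hxx : x i * x j = -(x j * x i) := by
        have := hcomm 1 1 (x i) (hx i) (x j) (hx j)
        simpa [neg_one_mul] using this
      refine ⟨-ε₀, ?_, fun hall' => absurd (hall' j hjJ) (not_le.mpr hji)⟩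
      have hjnotmem : j ∉ insert i J' := by
        simp only [Finset.mem_insert]
        rintro (rfl | hmem)
        · exact absurd rfl (ne_of_lt hji)
        · exact hjJ' hmem
      have hjle : ∀ b ∈ insert i J', j ≤ b := by
        intro b hb
        rcases Finset.mem_insert.mp hb with rfl | hb'
        · exact le_of_lt hji
        · exact hle b hb'
      have hcons : sqFreeMonomial x (insert j (insert i J')) =
          x j * sqFreeMonomial x (insert i J') := cons_mono x hjnotmem hjle
      have hcomm' : insert j (insert i J') = insert i J := by
        rw [Finset.insert_comm, hins]
      rw [hsplit, ← mul_assoc, hxx, neg_mul, mul_assoc, h0, mul_smul_comm, ← hcons, hcomm',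
        neg_smul]

lemma mono_empty : sqFreeMonomial x ∅ = (1 : B) := by
  simp [sqFreeMonomial]

lemma mono_mul (hcomm : ∀ (p q : ℕ), ∀ a ∈ 𝒜 p, ∀ b ∈ 𝒜 q,
      a * b = (-1 : B) ^ (p * q) * (b * a)) (hx : ∀ i, x i ∈ 𝒜 1) :
    ∀ (n : ℕ) (I : Finset (Fin d)), I.card = n → ∀ J : Finset (Fin d),
      ∃ ε : ℚ, sqFreeMonomial x I * sqFreeMonomial x J = ε • sqFreeMonomial x (I ∪ J) ∧
        (I = ∅ → ε = 1) ∧ (J = ∅ → ε = 1) ∧ (¬ Disjoint I J → ε = 0) := by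
  intro n
  induction n with
  | zero =>
    intro I hI J
    rw [Finset.card_eq_zero] at hI
    subst hI
    refine ⟨1, ?_, fun _ => rfl, fun _ => rfl, fun hnd => absurd (Finset.disjoint_empty_left J) hnd⟩
    rw [mono_empty, one_mul, one_smul, Finset.empty_union]
  | succ n ih =>
    intro I hcard J
    have hne : I.Nonempty := by
      rw [← Finset.card_pos, hcard]; exact Nat.succ_pos n
    set i := I.min' hne with hi
    have hiI : i ∈ I := I.min'_mem hne
    set I' := I.erase i with hI'
    have hiI' : i ∉ I' := Finset.notMem_erase _ _
    have hins : insert i I' = I := Finset.insert_erase hiI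
    have hle : ∀ b ∈ I', i ≤ b := fun b hb => I.min'_le b (Finset.mem_of_mem_erase hb)
    have hsplit : sqFreeMonomial x I = x i * sqFreeMonomial x I' := by
      conv_lhs => rw [← hins]
      exact cons_mono x hiI' hle
    have hcard' : I'.card = n := by
      rw [hI', Finset.card_erase_of_mem hiI, hcard]; rfl
    obtain ⟨ε', hε', _, hJ1, hdisj'⟩ := ih I' hcard' J
    have hIne : I ≠ ∅ := Finset.nonempty_iff_ne_empty.mp hne
    by_cases hiJ : i ∈ J
    · refine ⟨0, ?_, fun hI0 => absurd hI0 hIne, fun hJ0 => by subst hJ0; simp at hiJ,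
        fun _ => rfl⟩
      rw [zero_smul, hsplit, mul_assoc, hε', mul_smul_comm,
        xi_mul_mem 𝒜 x hcomm hx (I' ∪ J).card (I' ∪ J) rfl i (Finset.mem_union_right I' hiJ),
        smul_zero]
    · have hiIJ' : i ∉ I' ∪ J := by
        simp only [Finset.mem_union]
        rintro (h | h)
        · exact hiI' h
        · exact hiJ h
      obtain ⟨ε'', hε'', hone⟩ := xi_mul 𝒜 x hcomm hx (I' ∪ J).card (I' ∪ J) rfl i hiIJ'
      have huniv : insert i (I' ∪ J) = I ∪ J := by
        rw [← Finset.insert_union, hins]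
      refine ⟨ε' * ε'', ?_, fun hI0 => absurd hI0 hIne, ?_, ?_⟩
      · rw [hsplit, mul_assoc, hε', mul_smul_comm, hε'', huniv, smul_smul]
      · intro hJ0
        subst hJ0
        rw [hJ1 rfl, one_mul]
        exact hone (by simpa using hle)
      · intro hnd
        have : ¬ Disjoint I' J := by
          intro hdis
          apply hnd
          rw [← hins]
          exact Finset.disjoint_insert_left.mpr ⟨hiJ, hdis⟩
        rw [hdisj' this, zero_mul]

lemma decomp_mul_left (m r : ℕ) (t : B) (ht : t ∈ 𝒜 m) (c : B) :
    (DirectSum.decompose 𝒜 (t * c) r : B) =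
      if m ≤ r then t * (DirectSum.decompose 𝒜 c (r - m) : B) else 0 := by
  classical
  have hsum : t * c
      = ∑ q ∈ (DirectSum.decompose 𝒜 c).support, t * (DirectSum.decompose 𝒜 c q : B) := by
    rw [← Finset.mul_sum, DirectSum.sum_support_decompose]
  rw [hsum, DirectSum.decompose_sum, DFinsupp.finset_sum_apply,
    AddSubmonoidClass.coe_finset_sum]
  have hterm : ∀ q ∈ (DirectSum.decompose 𝒜 c).support,
      (DirectSum.decompose 𝒜 (t * (DirectSum.decompose 𝒜 c q : B)) r : B) =
        if q = r - m ∧ m ≤ r then t * (DirectSum.decompose 𝒜 c q : B) else 0 := by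
    intro q _
    have hmem : t * (DirectSum.decompose 𝒜 c q : B) ∈ 𝒜 (m + q) :=
      SetLike.mul_mem_graded ht (DirectSum.decompose 𝒜 c q).2
    by_cases hqr : m + q = r
    · rw [if_pos (by omega), DirectSum.decompose_of_mem_same 𝒜 (hqr ▸ hmem)]
    · rw [if_neg (by omega), DirectSum.decompose_of_mem_ne 𝒜 hmem hqr]
  rw [Finset.sum_congr rfl hterm]
  by_cases hmr : m ≤ r
  · simp only [hmr, and_true]
    rw [Finset.sum_ite_eq' (DirectSum.decompose 𝒜 c).support (r - m)
      (fun q => t * (DirectSum.decompose 𝒜 c q : B))]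
    simp only [if_true]
    by_cases hs : r - m ∈ (DirectSum.decompose 𝒜 c).support
    · rw [if_pos hs]
    · rw [if_neg hs, DFinsupp.notMem_support_iff.mp hs]
      simp
  · rw [if_neg hmr]
    apply Finset.sum_eq_zero
    intro q _
    rw [if_neg (by omega)]

lemma D_grading
    (A : Subalgebra ℚ B)
    (hAgr : ∀ a ∈ A, ∀ p : ℕ, (DirectSum.decompose 𝒜 a p : B) ∈ A)
    (hx : ∀ i, x i ∈ 𝒜 1)
    (hfree : Function.Bijective
      (fun f : Finset (Fin d) → A =>
        ∑ I : Finset (Fin d), sqFreeMonomial x I * ((f I : A) : B)))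
    (h : B →ₐ[ℚ] B)
    (hgr : ∀ p : ℕ, ∀ b ∈ 𝒜 p, h b ∈ 𝒜 p)
    (D : Finset (Fin d) → (A →ₗ[ℚ] A))
    (hD : ∀ a : A, h a = ∑ I : Finset (Fin d), sqFreeMonomial x I * ((D I a : A) : B)) :
    ∀ (p : ℕ) (a : A), (a : B) ∈ 𝒜 p →
      (∀ I : Finset (Fin d), ((D I a : A) : B) ∈ 𝒜 (p - I.card)) ∧
      (∀ I : Finset (Fin d), p < I.card → D I a = 0) := by
  classical
  intro p a ha
  set f : Finset (Fin d) → A := fun I =>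
    if I.card ≤ p then
      ⟨(DirectSum.decompose 𝒜 ((D I a : A) : B) (p - I.card) : B), hAgr _ (D I a).2 _⟩
    else 0 with hf
  have hcoe : ∀ I : Finset (Fin d), ((f I : A) : B) =
      if I.card ≤ p then (DirectSum.decompose 𝒜 ((D I a : A) : B) (p - I.card) : B) else 0 := by
    intro I
    by_cases hc : I.card ≤ p <;> simp [hf, hc]
  have hha : (h a : B) ∈ 𝒜 p := hgr p a ha
  have key : ∑ I : Finset (Fin d), sqFreeMonomial x I * ((f I : A) : B)
      = ∑ I : Finset (Fin d), sqFreeMonomial x I * ((D I a : A) : B) := by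
    rw [← hD a]
    calc ∑ I : Finset (Fin d), sqFreeMonomial x I * ((f I : A) : B)
        = ∑ I : Finset (Fin d),
            (DirectSum.decompose 𝒜 (sqFreeMonomial x I * ((D I a : A) : B)) p : B) := by
          apply Finset.sum_congr rfl
          intro I _
          rw [hcoe I, decomp_mul_left 𝒜 I.card p _ (mono_mem 𝒜 x hx I)]
          by_cases hc : I.card ≤ p
          · rw [if_pos hc, if_pos hc]
          · rw [if_neg hc, if_neg hc, mul_zero]
      _ = (DirectSum.decompose 𝒜 (∑ I : Finset (Fin d),
            sqFreeMonomial x I * ((D I a : A) : B)) p : B) := by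
          rw [DirectSum.decompose_sum, DFinsupp.finset_sum_apply,
            AddSubmonoidClass.coe_finset_sum]
      _ = (DirectSum.decompose 𝒜 (h a) p : B) := by rw [← hD a]
      _ = h a := DirectSum.decompose_of_mem_same 𝒜 hha
  have hfe : f = fun I => D I a := hfree.injective key
  constructor
  · intro I
    by_cases hc : I.card ≤ p
    · have : D I a = f I := (congrFun hfe I).symm
      rw [this, hf]
      simp only [if_pos hc]
      exact (DirectSum.decompose 𝒜 ((D I a : A) : B) (p - I.card)).2
    · have : D I a = f I := (congrFun hfe I).symm
      rw [this, hf]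
      simp only [if_neg hc]
      exact (𝒜 (p - I.card)).zero_mem
  · intro I hpc
    have : D I a = f I := (congrFun hfe I).symm
    rw [this, hf]
    simp only [if_neg (not_le.mpr hpc)]

lemma D_core
    (hcomm : ∀ (p q : ℕ), ∀ a ∈ 𝒜 p, ∀ b ∈ 𝒜 q,
      a * b = (-1 : B) ^ (p * q) * (b * a))
    (A : Subalgebra ℚ B)
    (hAgr : ∀ a ∈ A, ∀ p : ℕ, (DirectSum.decompose 𝒜 a p : B) ∈ A)
    (hd : 0 < d) (hx : ∀ i, x i ∈ 𝒜 1)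
    (hfree : Function.Bijective
      (fun f : Finset (Fin d) → A =>
        ∑ I : Finset (Fin d), sqFreeMonomial x I * ((f I : A) : B)))
    (h : B →ₐ[ℚ] B)
    (hgr : ∀ p : ℕ, ∀ b ∈ 𝒜 p, h b ∈ 𝒜 p)
    (D : Finset (Fin d) → (A →ₗ[ℚ] A))
    (hD : ∀ a : A, h a = ∑ I : Finset (Fin d), sqFreeMonomial x I * ((D I a : A) : B)) :
    ∀ (p : ℕ) (a b : A), (a : B) ∈ 𝒜 p →
      (D ∅ (a * b) = D ∅ a * D ∅ b) ∧
      (D {⟨0, hd⟩} (a * b) =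
        D {⟨0, hd⟩} a * D ∅ b + ((-1 : ℚ) ^ p) • (D ∅ a * D {⟨0, hd⟩} b)) := by
  classical
  intro p a b ha
  have hga : ∀ I : Finset (Fin d), ((D I a : A) : B) ∈ 𝒜 (p - I.card) :=
    (D_grading 𝒜 x A hAgr hx hfree h hgr D hD p a ha).1
  have hspec : ∀ z : Finset (Fin d) × Finset (Fin d), ∃ ε : ℚ,
      sqFreeMonomial x z.1 * sqFreeMonomial x z.2 = ε • sqFreeMonomial x (z.1 ∪ z.2) ∧
      (z.1 = ∅ → ε = 1) ∧ (z.2 = ∅ → ε = 1) ∧ (¬ Disjoint z.1 z.2 → ε = 0) :=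
    fun z => mono_mul 𝒜 x hcomm hx z.1.card z.1 rfl z.2
  choose ε hε hε1 hε2 hε0 using hspec
  set c : Finset (Fin d) × Finset (Fin d) → ℚ :=
    fun z => ((-1 : ℚ) ^ ((p - z.1.card) * z.2.card)) * ε z with hc
  set g : Finset (Fin d) → A := fun K =>
    ∑ z ∈ Finset.univ.filter
        (fun z : Finset (Fin d) × Finset (Fin d) => z.1 ∪ z.2 = K),
      (c z) • (D z.1 a * D z.2 b) with hg
  -- per-term computation
  have hterm : ∀ z : Finset (Fin d) × Finset (Fin d),
      (sqFreeMonomial x z.1 * ((D z.1 a : A) : B)) *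
        (sqFreeMonomial x z.2 * ((D z.2 b : A) : B))
      = (c z) • (sqFreeMonomial x (z.1 ∪ z.2) *
          (((D z.1 a : A) : B) * ((D z.2 b : A) : B))) := by
    rintro ⟨I, J⟩
    have hswap : ((D I a : A) : B) * sqFreeMonomial x J
        = ((-1 : ℚ) ^ ((p - I.card) * J.card)) •
            (sqFreeMonomial x J * ((D I a : A) : B)) := by
      have h1 := hcomm (p - I.card) J.card _ (hga I) _ (mono_mem 𝒜 x hx J)
      rw [h1, Algebra.smul_def, map_pow, map_neg, map_one]
    calc (sqFreeMonomial x I * ((D I a : A) : B)) *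
          (sqFreeMonomial x J * ((D J b : A) : B))
        = sqFreeMonomial x I * ((((D I a : A) : B) * sqFreeMonomial x J) *
            ((D J b : A) : B)) := by rw [mul_assoc, ← mul_assoc (((D I a : A)) : B)]
      _ = ((-1 : ℚ) ^ ((p - I.card) * J.card)) •
            (sqFreeMonomial x I * (sqFreeMonomial x J *
              (((D I a : A) : B) * ((D J b : A) : B)))) := by
          rw [hswap, smul_mul_assoc, mul_smul_comm, mul_assoc]
      _ = ((-1 : ℚ) ^ ((p - I.card) * J.card)) •
            ((sqFreeMonomial x I * sqFreeMonomial x J) *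
              (((D I a : A) : B) * ((D J b : A) : B))) := by rw [mul_assoc]
      _ = (c (I, J)) • (sqFreeMonomial x (I ∪ J) *
            (((D I a : A) : B) * ((D J b : A) : B))) := by
          rw [hε (I, J), smul_mul_assoc, smul_smul, hc]
  -- main identity
  have hmain : ∑ K : Finset (Fin d), sqFreeMonomial x K * ((g K : A) : B)
      = ∑ K : Finset (Fin d), sqFreeMonomial x K * ((D K (a * b) : A) : B) := by
    rw [← hD (a * b)]
    have habc : ((a * b : A) : B) = (a : B) * (b : B) := rfl
    rw [habc, map_mul, hD a, hD b, Finset.sum_mul_sum]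
    rw [← Finset.sum_product' (s := Finset.univ) (t := Finset.univ)
      (f := fun I J => (sqFreeMonomial x I * ((D I a : A) : B)) *
        (sqFreeMonomial x J * ((D J b : A) : B)))]
    rw [Finset.univ_product_univ]
    rw [← Finset.sum_fiberwise_of_maps_to
      (g := fun z : Finset (Fin d) × Finset (Fin d) => z.1 ∪ z.2)
      (fun z _ => Finset.mem_univ (z.1 ∪ z.2))
      (f := fun z : Finset (Fin d) × Finset (Fin d) =>
        (sqFreeMonomial x z.1 * ((D z.1 a : A) : B)) *
          (sqFreeMonomial x z.2 * ((D z.2 b : A) : B)))]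
    apply Finset.sum_congr rfl
    intro K _
    rw [hg]
    push_cast [AddSubmonoidClass.coe_finset_sum]
    rw [Finset.mul_sum]
    apply Finset.sum_congr rfl
    intro z hz
    have hzK : z.1 ∪ z.2 = K := (Finset.mem_filter.mp hz).2
    rw [hterm z, hzK, mul_smul_comm]
  have hgeq : g = fun K => D K (a * b) := hfree.injective hmain
  constructor
  · rw [← congrFun hgeq ∅]
    simp only [hg]
    have hfilter : Finset.univ.filter
        (fun z : Finset (Fin d) × Finset (Fin d) => z.1 ∪ z.2 = ∅) = {((∅ : Finset (Fin d)), (∅ : Finset (Fin d)))} := by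
      ext z
      simp [Finset.union_eq_empty, Prod.ext_iff]
    rw [hfilter, Finset.sum_singleton]
    have hc1 : c (∅, ∅) = 1 := by
      simp [hc, hε1 (∅, ∅) rfl]
    rw [hc1, one_smul]
  · rw [← congrFun hgeq {⟨0, hd⟩}]
    simp only [hg]
    set z0 : Fin d := ⟨0, hd⟩ with hz0
    have hfilter : Finset.univ.filter
        (fun z : Finset (Fin d) × Finset (Fin d) => z.1 ∪ z.2 = {z0})
        = {((∅ : Finset (Fin d)), ({z0} : Finset (Fin d))), ({z0}, ∅), ({z0}, {z0})} := by
      ext ⟨I, J⟩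
      simp only [Finset.mem_filter, Finset.mem_univ, true_and, Finset.mem_insert,
        Finset.mem_singleton, Prod.mk.injEq]
      constructor
      · intro hu
        have hI : I ⊆ {z0} := hu ▸ Finset.subset_union_left
        have hJ : J ⊆ {z0} := hu ▸ Finset.subset_union_right
        rcases Finset.subset_singleton_iff.mp hI with rfl | rfl <;>
            rcases Finset.subset_singleton_iff.mp hJ with rfl | rfl
        · rw [Finset.union_empty] at hu
          exact absurd hu.symm (Finset.singleton_ne_empty z0)
        · exact Or.inl ⟨rfl, rfl⟩
        · exact Or.inr (Or.inl ⟨rfl, rfl⟩)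
        · exact Or.inr (Or.inr ⟨rfl, rfl⟩)
      · rintro (⟨rfl, rfl⟩ | ⟨rfl, rfl⟩ | ⟨rfl, rfl⟩) <;> simp
    rw [hfilter]
    have hne : ({z0} : Finset (Fin d)) ≠ (∅ : Finset (Fin d)) := Finset.singleton_ne_empty z0
    have hmem1 : ((∅ : Finset (Fin d)), ({z0} : Finset (Fin d)))
        ∉ ({({z0}, ∅), ({z0}, {z0})} : Finset (Finset (Fin d) × Finset (Fin d))) := by
      simp [Prod.ext_iff, hne.symm]
    have hmem2 : (({z0} : Finset (Fin d)), (∅ : Finset (Fin d)))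
        ∉ ({({z0}, {z0})} : Finset (Finset (Fin d) × Finset (Fin d))) := by
      simp [Prod.ext_iff, hne.symm]
    rw [Finset.sum_insert hmem1, Finset.sum_insert hmem2, Finset.sum_singleton]
    have hcA : c (∅, {z0}) = (-1 : ℚ) ^ p := by
      simp [hc, hε1 (∅, {z0}) rfl]
    have hcB : c ({z0}, ∅) = 1 := by
      simp [hc, hε2 ({z0}, ∅) rfl]
    have hcC : c ({z0}, {z0}) = 0 := by
      have : ¬ Disjoint ({z0} : Finset (Fin d)) ({z0} : Finset (Fin d)) := by
        simp [Finset.disjoint_singleton_left]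
      simp [hc, hε0 ({z0}, {z0}) this]
    rw [hcA, hcB, hcC, one_smul, zero_smul, add_zero, add_comm]

lemma D0_mul
    (hcomm : ∀ (p q : ℕ), ∀ a ∈ 𝒜 p, ∀ b ∈ 𝒜 q,
      a * b = (-1 : B) ^ (p * q) * (b * a))
    (A : Subalgebra ℚ B)
    (hAgr : ∀ a ∈ A, ∀ p : ℕ, (DirectSum.decompose 𝒜 a p : B) ∈ A)
    (hd : 0 < d) (hx : ∀ i, x i ∈ 𝒜 1)
    (hfree : Function.Bijective
      (fun f : Finset (Fin d) → A =>
        ∑ I : Finset (Fin d), sqFreeMonomial x I * ((f I : A) : B)))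
    (h : B →ₐ[ℚ] B)
    (hgr : ∀ p : ℕ, ∀ b ∈ 𝒜 p, h b ∈ 𝒜 p)
    (D : Finset (Fin d) → (A →ₗ[ℚ] A))
    (hD : ∀ a : A, h a = ∑ I : Finset (Fin d), sqFreeMonomial x I * ((D I a : A) : B)) :
    ∀ a b : A, D ∅ (a * b) = D ∅ a * D ∅ b := by
  classical
  intro a b
  set s := (DirectSum.decompose 𝒜 (a : B)).support with hs
  set aq : ℕ → A := fun q => ⟨(DirectSum.decompose 𝒜 (a : B) q : B), hAgr _ a.2 q⟩ with haq
  have hasum : a = ∑ q ∈ s, aq q := by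
    apply Subtype.ext
    push_cast [AddSubmonoidClass.coe_finset_sum]
    exact (DirectSum.sum_support_decompose 𝒜 (a : B)).symm
  have hmem : ∀ q, ((aq q : A) : B) ∈ 𝒜 q := fun q => (DirectSum.decompose 𝒜 (a : B) q).2
  calc D ∅ (a * b) = D ∅ ((∑ q ∈ s, aq q) * b) := by rw [← hasum]
    _ = ∑ q ∈ s, D ∅ (aq q * b) := by rw [Finset.sum_mul, map_sum]
    _ = ∑ q ∈ s, D ∅ (aq q) * D ∅ b := by
        apply Finset.sum_congr rfl
        intro q _
        exact (D_core 𝒜 x hcomm A hAgr hd hx hfree h hgr D hD q (aq q) b (hmem q)).1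
    _ = (∑ q ∈ s, D ∅ (aq q)) * D ∅ b := by rw [Finset.sum_mul]
    _ = D ∅ a * D ∅ b := by rw [← map_sum, ← hasum]

lemma D0_preim
    (A : Subalgebra ℚ B)
    (hAgr : ∀ a ∈ A, ∀ p : ℕ, (DirectSum.decompose 𝒜 a p : B) ∈ A)
    (hx : ∀ i, x i ∈ 𝒜 1)
    (hfree : Function.Bijective
      (fun f : Finset (Fin d) → A =>
        ∑ I : Finset (Fin d), sqFreeMonomial x I * ((f I : A) : B)))
    (h : B →ₐ[ℚ] B)
    (hgr : ∀ p : ℕ, ∀ b ∈ 𝒜 p, h b ∈ 𝒜 p)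
    (D : Finset (Fin d) → (A →ₗ[ℚ] A))
    (hD : ∀ a : A, h a = ∑ I : Finset (Fin d), sqFreeMonomial x I * ((D I a : A) : B))
    (hbij : Function.Injective (D ∅)) :
    ∀ (p : ℕ) (a' : A), ((D ∅ a' : A) : B) ∈ 𝒜 p → (a' : B) ∈ 𝒜 p := by
  classical
  intro p a' hDa
  set s := (DirectSum.decompose 𝒜 (a' : B)).support with hs
  set aq : ℕ → A := fun q => ⟨(DirectSum.decompose 𝒜 (a' : B) q : B), hAgr _ a'.2 q⟩ with haq
  have hasum : a' = ∑ q ∈ s, aq q := by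
    apply Subtype.ext
    push_cast [AddSubmonoidClass.coe_finset_sum]
    exact (DirectSum.sum_support_decompose 𝒜 (a' : B)).symm
  have hmemq : ∀ q, ((aq q : A) : B) ∈ 𝒜 q := fun q => (DirectSum.decompose 𝒜 (a' : B) q).2
  have hmemD : ∀ q, ((D ∅ (aq q) : A) : B) ∈ 𝒜 q := by
    intro q
    have := (D_grading 𝒜 x A hAgr hx hfree h hgr D hD q (aq q) (hmemq q)).1 ∅
    simpa using this
  have hDsum : ((D ∅ a' : A) : B) = ∑ q ∈ s, ((D ∅ (aq q) : A) : B) := by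
    conv_lhs => rw [hasum]
    rw [map_sum]
    push_cast [AddSubmonoidClass.coe_finset_sum]
    rfl
  have hsub : s ⊆ {p} := by
    intro q hq
    rw [Finset.mem_singleton]
    by_contra hqp
    have hzero : ((D ∅ (aq q) : A) : B) = 0 := by
      have h1 : (DirectSum.decompose 𝒜 ((D ∅ a' : A) : B) q : B) = 0 :=
        DirectSum.decompose_of_mem_ne 𝒜 hDa (Ne.symm hqp)
      have h2 : (DirectSum.decompose 𝒜 ((D ∅ a' : A) : B) q : B)
          = ((D ∅ (aq q) : A) : B) := by
        rw [hDsum, DirectSum.decompose_sum, DFinsupp.finset_sum_apply,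
          AddSubmonoidClass.coe_finset_sum]
        rw [Finset.sum_eq_single_of_mem q hq]
        · exact DirectSum.decompose_of_mem_same 𝒜 (hmemD q)
        · intro q' _ hq'
          exact DirectSum.decompose_of_mem_ne 𝒜 (hmemD q') hq'
      rw [← h2, h1]
    have haq0 : aq q = 0 := by
      apply hbij
      rw [map_zero]
      exact Subtype.ext hzero
    have : DirectSum.decompose 𝒜 (a' : B) q ≠ 0 := DFinsupp.mem_support_iff.mp hq
    apply this
    have : ((DirectSum.decompose 𝒜 (a' : B) q : B)) = 0 := congrArg Subtype.val haq0
    exact Subtype.ext this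
  rcases Finset.subset_singleton_iff.mp hsub with h0 | h0
  · have : (a' : B) = 0 := by
      rw [hasum]
      push_cast [AddSubmonoidClass.coe_finset_sum]
      rw [h0, Finset.sum_empty]
    rw [this]; exact (𝒜 p).zero_mem
  · have : (a' : B) = (DirectSum.decompose 𝒜 (a' : B) p : B) := by
      conv_lhs => rw [← DirectSum.sum_support_decompose 𝒜 (a' : B)]
      rw [← hs, h0, Finset.sum_singleton]
    rw [this]
    exact (DirectSum.decompose 𝒜 (a' : B) p).2

end Aux

/-- identity (1) ("e:hom") of Section 4 of Belegradek–Kapovitch and its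
consequence.  In the torus expansion setup, let `h` be a grading-preserving ℚ-algebra
endomorphism of `B` with partial derivatives `D_I : A → A`, and write `D₀ = D_∅`,
`D₁ = D_{{1}}`.  Then `D₁(ab) = D₁(a)·D₀(b) + (−1)^p·D₀(a)·D₁(b)` for `a ∈ A_p`, `b ∈ A`;
consequently, if `D₀` is bijective then `D₁ ∘ D₀⁻¹` is a derivation of `A` of degree `-1`. -/
theorem first_partial_derivative_identity
    {B : Type} [Ring B] [Algebra ℚ B]
    (𝒜 : ℕ → Submodule ℚ B) [GradedAlgebra 𝒜]
    -- graded commutativity of `B`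
    (hcomm : ∀ (p q : ℕ), ∀ a ∈ 𝒜 p, ∀ b ∈ 𝒜 q,
      a * b = (-1 : B) ^ (p * q) * (b * a))
    -- `A` is a graded subalgebra of `B`
    (A : Subalgebra ℚ B)
    (hAgr : ∀ a ∈ A, ∀ p : ℕ, (DirectSum.decompose 𝒜 a p : B) ∈ A)
    -- `x₁, …, x_d` are degree-one elements (`d ≥ 1`) …
    (d : ℕ) (hd : 0 < d) (x : Fin d → B) (hx : ∀ i, x i ∈ 𝒜 1)
    -- … whose `2^d` square-free monomials `t_I` form a basis of `B` as a left `A`-module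
    (hfree : Function.Bijective
      (fun f : Finset (Fin d) → A =>
        ∑ I : Finset (Fin d), sqFreeMonomial x I * ((f I : A) : B)))
    -- `h` is a grading-preserving ℚ-algebra endomorphism of `B`
    (h : B →ₐ[ℚ] B)
    (hgr : ∀ p : ℕ, ∀ b ∈ 𝒜 p, h b ∈ 𝒜 p)
    -- with partial derivatives `D_I : A → A`
    (D : Finset (Fin d) → (A →ₗ[ℚ] A))
    (hD : ∀ a : A, h a = ∑ I : Finset (Fin d), sqFreeMonomial x I * ((D I a : A) : B)) :
    -- writing `D₀ = D_∅` and `D₁ = D_{{1}}`: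
    (∀ (p : ℕ) (a b : A), (a : B) ∈ 𝒜 p →
      D {⟨0, hd⟩} (a * b) =
        D {⟨0, hd⟩} a * D ∅ b + (-1 : A) ^ p * (D ∅ a * D {⟨0, hd⟩} b)) ∧
    -- and if `D₀` is bijective, then `E = D₁ ∘ D₀⁻¹` is a derivation of degree `-1`:
    (Function.Bijective (D ∅) →
      ∀ E : A →ₗ[ℚ] A, (∀ a : A, E (D ∅ a) = D {⟨0, hd⟩} a) →
        (∀ (p : ℕ) (a : A), (a : B) ∈ 𝒜 p →
          (p = 0 → E a = 0) ∧
          (∀ q : ℕ, p = q + 1 → ((E a : A) : B) ∈ 𝒜 q)) ∧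
        (∀ (p : ℕ) (a b : A), (a : B) ∈ 𝒜 p →
          E (a * b) = E a * b + (-1 : A) ^ p * (a * E b))) := by
  have hsc : ∀ (p : ℕ) (y : A), ((-1 : ℚ) ^ p) • y = (-1 : A) ^ p * y := by
    intro p y
    rw [Algebra.smul_def, map_pow, map_neg, map_one]
  constructor
  · intro p a b ha
    rw [← hsc p]
    exact (D_core 𝒜 x hcomm A hAgr hd hx hfree h hgr D hD p a b ha).2
  · intro hbij E hE
    constructor
    · intro p a ha
      obtain ⟨a', rfl⟩ := hbij.surjective a
      have ha' : (a' : B) ∈ 𝒜 p :=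
        D0_preim 𝒜 x A hAgr hx hfree h hgr D hD hbij.injective p a' ha
      have hEa : E (D ∅ a') = D {⟨0, hd⟩} a' := hE a'
      constructor
      · intro hp0
        rw [hEa]
        apply (D_grading 𝒜 x A hAgr hx hfree h hgr D hD p a' ha').2
        rw [hp0, Finset.card_singleton]
        exact Nat.zero_lt_one
      · intro q hpq
        rw [hEa]
        have := (D_grading 𝒜 x A hAgr hx hfree h hgr D hD p a' ha').1 {⟨0, hd⟩}
        rw [Finset.card_singleton, hpq] at this
        simpa using this
    · intro p a b ha
      obtain ⟨a', rfl⟩ := hbij.surjective a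
      obtain ⟨b', rfl⟩ := hbij.surjective b
      have ha' : (a' : B) ∈ 𝒜 p :=
        D0_preim 𝒜 x A hAgr hx hfree h hgr D hD hbij.injective p a' ha
      have hab : D ∅ a' * D ∅ b' = D ∅ (a' * b') :=
        (D0_mul 𝒜 x hcomm A hAgr hd hx hfree h hgr D hD a' b').symm
      rw [hab, hE (a' * b'), hE a', hE b']
      rw [← hsc p]
      exact (D_core 𝒜 x hcomm A hAgr hd hx hfree h hgr D hD p a' b' ha').2
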